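/- Euclidean norm bound for a Gaussian noise vector (part of Lemma C.3): Let d ≥ 1 be an integer, s > 0, and δ ∈ (0,1). Let Y₁,…,Y_d be independent real-valued random variables, each with the Gaussian distribution of mean 0 and variance s², and let Y := (Y₁,…,Y_d) ∈ ℝ^d. Then the probability that ‖Y‖₂ > s·√(2·d·log(2d/δ)) is at most δ. -/

import Mathlib

open MeasureTheory ProbabilityTheory

open Real
open scoped NNReal ENNReal

private lemma gauss_tail_Ici {v : ℝ≥0} (hv : v ≠ 0) {a : ℝ} (ha : 0 ≤ a) :
    gaussianReal 0 v (Set.Ici a) ≤ ENNReal.ofReal (Real.exp (-a ^ 2 / (2 * v)) / 2) := by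
  have hvpos : (0 : ℝ) < (v : ℝ) := by positivity
  rw [gaussianReal_apply_eq_integral 0 hv]
  refine ENNReal.ofReal_le_ofReal ?_
  rw [integral_Ici_eq_integral_Ioi]
  have hshift : ∫ x in Set.Ioi a, gaussianPDFReal 0 v x
      = ∫ x in Set.Ioi (0 : ℝ), gaussianPDFReal 0 v (x + a) := by
    rw [← (measurePreserving_add_right volume a).setIntegral_preimage_emb
      (measurableEmbedding_addRight a) (gaussianPDFReal 0 v) (Set.Ioi a)]
    congr 1
    simp
  rw [hshift]
  have hbound : ∫ x in Set.Ioi (0 : ℝ), gaussianPDFReal 0 v (x + a)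
      ≤ ∫ x in Set.Ioi (0 : ℝ), Real.exp (-a ^ 2 / (2 * v)) * gaussianPDFReal 0 v x := by
    refine setIntegral_mono_on ?_ ?_ measurableSet_Ioi ?_
    · have : Integrable (fun x => gaussianPDFReal 0 v (x + a)) := by
        simpa [gaussianPDFReal_add] using integrable_gaussianPDFReal (0 - a) v
      exact this.integrableOn
    · exact ((integrable_gaussianPDFReal 0 v).const_mul _).integrableOn
    · intro x hx
      simp only [Set.mem_Ioi] at hx
      simp only [gaussianPDFReal, sub_zero]
      have key : Real.exp (-(x + a) ^ 2 / (2 * (v : ℝ)))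
          ≤ Real.exp (-a ^ 2 / (2 * (v : ℝ))) * Real.exp (-x ^ 2 / (2 * (v : ℝ))) := by
        rw [← Real.exp_add, ← add_div]
        refine Real.exp_le_exp.mpr ((div_le_div_iff_of_pos_right (by positivity)).mpr ?_)
        nlinarith [mul_nonneg ha hx.le]
      calc (√(2 * π * (v : ℝ)))⁻¹ * Real.exp (-(x + a) ^ 2 / (2 * (v : ℝ)))
          ≤ (√(2 * π * (v : ℝ)))⁻¹
              * (Real.exp (-a ^ 2 / (2 * (v : ℝ))) * Real.exp (-x ^ 2 / (2 * (v : ℝ)))) :=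
            mul_le_mul_of_nonneg_left key (by positivity)
        _ = Real.exp (-a ^ 2 / (2 * (v : ℝ)))
              * ((√(2 * π * (v : ℝ)))⁻¹ * Real.exp (-x ^ 2 / (2 * (v : ℝ)))) := by ring
  refine hbound.trans ?_
  rw [integral_const_mul]
  have hhalf : ∫ x in Set.Ioi (0 : ℝ), gaussianPDFReal 0 v x = 1 / 2 := by
    simp only [gaussianPDFReal, sub_zero]
    rw [integral_const_mul]
    have hrw : ∀ x : ℝ, -x ^ 2 / (2 * (v : ℝ)) = -(2 * (v : ℝ))⁻¹ * x ^ 2 := by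
      intro x; field_simp
    simp_rw [hrw]
    rw [integral_gaussian_Ioi]
    rw [show π / (2 * (v : ℝ))⁻¹ = 2 * π * (v : ℝ) by field_simp]
    have hne : √(2 * π * (v : ℝ)) ≠ 0 := by positivity
    field_simp
  rw [hhalf]
  rw [mul_one_div]

private lemma gauss_tail_abs {v : ℝ≥0} (hv : v ≠ 0) {a : ℝ} (ha : 0 ≤ a) :
    gaussianReal 0 v {x | a < |x|} ≤ ENNReal.ofReal (Real.exp (-a ^ 2 / (2 * v))) := by
  have htail := gauss_tail_Ici hv ha
  have hmap : (gaussianReal 0 v).map (fun x : ℝ => -1 * x) = gaussianReal 0 v := by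
    rw [gaussianReal_map_const_mul (-1 : ℝ)]
    norm_num
  have hneg : gaussianReal 0 v ((fun x : ℝ => -1 * x) ⁻¹' Set.Ici a)
      ≤ ENNReal.ofReal (Real.exp (-a ^ 2 / (2 * v)) / 2) := by
    have hm : Measurable (fun x : ℝ => -1 * x) := measurable_id.const_mul (-1)
    rw [← Measure.map_apply hm measurableSet_Ici, hmap]
    exact htail
  have hsub : {x : ℝ | a < |x|} ⊆ Set.Ici a ∪ (fun x : ℝ => -1 * x) ⁻¹' Set.Ici a := by
    intro x hx
    simp only [Set.mem_setOf_eq, lt_abs] at hx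
    rcases hx with h | h
    · exact Or.inl h.le
    · refine Or.inr ?_
      simp only [Set.mem_preimage, Set.mem_Ici, neg_one_mul]
      linarith
  calc gaussianReal 0 v {x | a < |x|}
      ≤ gaussianReal 0 v (Set.Ici a) + gaussianReal 0 v ((fun x : ℝ => -1 * x) ⁻¹' Set.Ici a) :=
        (measure_mono hsub).trans (measure_union_le _ _)
    _ ≤ ENNReal.ofReal (Real.exp (-a ^ 2 / (2 * v)) / 2)
        + ENNReal.ofReal (Real.exp (-a ^ 2 / (2 * v)) / 2) := add_le_add htail hneg
    _ = ENNReal.ofReal (Real.exp (-a ^ 2 / (2 * v))) := by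
        rw [← ENNReal.ofReal_add (by positivity) (by positivity)]
        ring_nf

/-- Euclidean norm bound for a Gaussian noise vector (part of Lemma C.3): if
`Y₁,…,Y_d` are independent `N(0, s²)` random variables, then with probability at
least `1 − δ`, `‖Y‖₂ ≤ s·√(2·d·log(2d/δ))`. -/
theorem gaussian_vector_norm_bound
    {Ω : Type*} [MeasureSpace Ω] [IsProbabilityMeasure (ℙ : Measure Ω)]
    (d : ℕ) (hd : 1 ≤ d)
    (s δ : ℝ) (hs : 0 < s) (hδ0 : 0 < δ) (hδ1 : δ < 1)
    (Y : Fin d → Ω → ℝ)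
    (hmeas : ∀ i, Measurable (Y i))
    (hindep : iIndepFun Y ℙ)
    (hdist : ∀ i, Measure.map (Y i) ℙ = gaussianReal 0 ⟨s ^ 2, sq_nonneg s⟩) :
    ℙ {ω | s * Real.sqrt (2 * d * Real.log (2 * d / δ)) <
        Real.sqrt (∑ i, (Y i ω) ^ 2)} ≤ ENNReal.ofReal δ := by
  have hd0 : (0 : ℝ) < d := by exact_mod_cast hd
  set L : ℝ := Real.log (2 * d / δ) with hLdef
  have hratio : (1 : ℝ) ≤ 2 * d / δ := by
    have h1 : (1 : ℝ) ≤ d := by exact_mod_cast hd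
    rw [le_div_iff₀ hδ0]
    nlinarith
  have hL : 0 ≤ L := Real.log_nonneg hratio
  set a : ℝ := s * Real.sqrt (2 * L) with hadef
  have ha : 0 ≤ a := by positivity
  have hT : s * Real.sqrt (2 * d * L) = Real.sqrt d * a := by
    rw [hadef, show 2 * (d : ℝ) * L = d * (2 * L) by ring,
      Real.sqrt_mul (le_of_lt hd0)]
    ring
  have hsub : {ω | s * Real.sqrt (2 * d * L) < Real.sqrt (∑ i, (Y i ω) ^ 2)}
      ⊆ ⋃ i, {ω | a < |Y i ω|} := by
    intro ω hω
    simp only [Set.mem_setOf_eq] at hω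
    by_contra hcon
    simp only [Set.mem_iUnion, Set.mem_setOf_eq, not_exists, not_lt] at hcon
    have hsum : (∑ i, (Y i ω) ^ 2) ≤ d * a ^ 2 := by
      calc (∑ i, (Y i ω) ^ 2) ≤ ∑ _i : Fin d, a ^ 2 := by
            refine Finset.sum_le_sum fun i _ => ?_
            have := hcon i
            nlinarith [abs_nonneg (Y i ω), sq_abs (Y i ω)]
        _ = d * a ^ 2 := by simp [Finset.sum_const, mul_comm]
    have : Real.sqrt (∑ i, (Y i ω) ^ 2) ≤ Real.sqrt d * a := by
      rw [← Real.sqrt_sq ha, ← Real.sqrt_mul (le_of_lt hd0)]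
      exact Real.sqrt_le_sqrt hsum
    rw [hT] at hω
    linarith
  set v : ℝ≥0 := (⟨s ^ 2, sq_nonneg s⟩ : ℝ≥0) with hvdef
  have hv : v ≠ 0 := by
    intro h
    have : (v : ℝ) = 0 := by rw [h]; simp
    rw [hvdef] at this
    change s ^ 2 = 0 at this
    nlinarith
  have hcoord : ∀ i, ℙ {ω | a < |Y i ω|} ≤ ENNReal.ofReal (δ / (2 * d)) := by
    intro i
    have hset : MeasurableSet {x : ℝ | a < |x|} :=
      measurableSet_lt measurable_const measurable_id.abs
    have : ℙ {ω | a < |Y i ω|} = (Measure.map (Y i) ℙ) {x | a < |x|} := by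
      rw [Measure.map_apply (hmeas i) hset]
      rfl
    rw [this, hdist i]
    have hexp : Real.exp (-a ^ 2 / (2 * v)) = δ / (2 * d) := by
      have ha2 : a ^ 2 = s ^ 2 * (2 * L) := by
        rw [hadef, mul_pow, Real.sq_sqrt (by positivity)]
      have hv2 : (v : ℝ) = s ^ 2 := rfl
      rw [ha2, hv2, show -(s ^ 2 * (2 * L)) / (2 * s ^ 2) = -L by field_simp]
      rw [hLdef, Real.exp_neg, Real.exp_log (by positivity)]
      rw [inv_div]
    calc gaussianReal 0 v {x | a < |x|} ≤ ENNReal.ofReal (Real.exp (-a ^ 2 / (2 * v))) :=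
          gauss_tail_abs hv ha
      _ = ENNReal.ofReal (δ / (2 * d)) := by rw [hexp]
  calc ℙ {ω | s * Real.sqrt (2 * d * L) < Real.sqrt (∑ i, (Y i ω) ^ 2)}
      ≤ ℙ (⋃ i, {ω | a < |Y i ω|}) := measure_mono hsub
    _ ≤ ∑ i, ℙ {ω | a < |Y i ω|} := measure_iUnion_fintype_le _ _
    _ ≤ ∑ _i : Fin d, ENNReal.ofReal (δ / (2 * d)) := Finset.sum_le_sum fun i _ => hcoord i
    _ = (d : ℝ≥0∞) * ENNReal.ofReal (δ / (2 * d)) := by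
        simp [Finset.sum_const, mul_comm]
    _ = ENNReal.ofReal ((d : ℝ) * (δ / (2 * d))) := by
        rw [ENNReal.ofReal_mul (le_of_lt hd0), ENNReal.ofReal_natCast]
    _ ≤ ENNReal.ofReal δ := by
        refine ENNReal.ofReal_le_ofReal ?_
        rw [show (d : ℝ) * (δ / (2 * d)) = δ / 2 by field_simp]
        linarith
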